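/- Let G be an abelian topological group whose identity component H (the connected component of the identity, which is a subgroup of G) is open in G and is divisible as an abstract abelian group. Then the quotient homomorphism \pi : G \to G/H admits a group-homomorphism section s with \pi \circ s = id, and the map H \times (G/H) \to G given by (h, d) \mapsto h \cdot s(d) is an isomorphism of topological groups, where G/H carries the (discrete) quotient topology. -/

import Mathlib

section Aux

variable {G : Type*} [CommGroup G]

/-- Given a divisibility hypothesis on a subgroup `H` of a commutative group `G`,
there is a retraction `ρ : G →* H` restricting to the identity on `H`. -/
theorem exists_retraction_of_divisible (H : Subgroup G)
    (hdiv : ∀ (h : H) (n : ℕ), 0 < n → ∃ h' : H, h' ^ n = h) :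
    ∃ ρ : G →* H, ∀ h : H, ρ (h : G) = h := by
  classical
  letI : RootableBy H ℕ := rootableByOfPowLeftSurj _ _ (by
    intro n hn a
    obtain ⟨h', hh'⟩ := hdiv a n (Nat.pos_of_ne_zero hn)
    exact ⟨h', hh'⟩)
  letI : RootableBy H ℤ := Group.rootableByIntOfRootableByNat H
  letI : DivisibleBy (Additive H) ℤ :=
    { div := fun a n => Additive.ofMul (RootableBy.root a.toMul n)
      div_zero := fun a => congrArg Additive.ofMul (RootableBy.root_zero a.toMul)
      div_cancel := fun {n} a hn => by
        rw [← ofMul_zpow, RootableBy.root_cancel _ hn]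
        rfl }
  have baer : Module.Baer ℤ (Additive H) := Module.Baer.of_divisible (Additive H)
  obtain ⟨r, hr⟩ := baer.extension_property_addMonoidHom
    (MonoidHom.toAdditive (H.subtype))
    (by exact fun a b hab => Subtype.ext (by exact congrArg Additive.toMul hab))
    (AddMonoidHom.id (Additive H))
  refine ⟨MonoidHom.toAdditive.symm r, fun h => ?_⟩
  have := DFunLike.congr_fun hr (Additive.ofMul h)
  exact congrArg Additive.toMul this

end Aux

/-- Let `G` be an abelian topological group whose identity component `H`
is open in `G` and divisible. Then the quotient homomorphism `π : G → G/H` admits a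
group-homomorphism section `s` with `π ∘ s = id`, and `(h, d) ↦ h * s d` is an isomorphism
of topological groups `H × (G/H) ≃ G`, where `G/H` carries the quotient topology. -/
theorem identityComponent_splits_of_divisible
    {G : Type*} [CommGroup G] [TopologicalSpace G] [IsTopologicalGroup G]
    (hopen : IsOpen ((Subgroup.connectedComponentOfOne G : Subgroup G) : Set G))
    (hdiv : ∀ (h : Subgroup.connectedComponentOfOne G) (n : ℕ), 0 < n →
      ∃ h' : Subgroup.connectedComponentOfOne G, h' ^ n = h) :
    ∃ s : G ⧸ Subgroup.connectedComponentOfOne G →* G,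
      (QuotientGroup.mk' (Subgroup.connectedComponentOfOne G)).comp s =
        MonoidHom.id (G ⧸ Subgroup.connectedComponentOfOne G) ∧
      ∃ φ : (Subgroup.connectedComponentOfOne G × G ⧸ Subgroup.connectedComponentOfOne G) ≃ₜ G,
        (∀ a b, φ (a * b) = φ a * φ b) ∧
        (∀ (h : Subgroup.connectedComponentOfOne G)
           (d : G ⧸ Subgroup.connectedComponentOfOne G), φ (h, d) = (h : G) * s d) := by
  classical
  set H := Subgroup.connectedComponentOfOne G with hHdef
  obtain ⟨ρ, hρ⟩ := exists_retraction_of_divisible H hdiv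
  -- the "complement" homomorphism
  set σ : G →* G := MonoidHom.id G / (H.subtype.comp ρ) with hσdef
  have hσ : ∀ g : G, σ g = g * (ρ g : G)⁻¹ := fun g => by
    simp [hσdef, div_eq_mul_inv]
  have hσH : ∀ g ∈ H, σ g = 1 := by
    intro g hg
    rw [hσ]
    have : ρ g = ⟨g, hg⟩ := hρ ⟨g, hg⟩
    rw [this]
    exact mul_inv_cancel g
  set s : G ⧸ H →* G := QuotientGroup.lift H σ hσH with hsdef
  have hsec : ∀ g : G, QuotientGroup.mk (s (QuotientGroup.mk g)) = (QuotientGroup.mk g : G ⧸ H) := by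
    intro g
    show QuotientGroup.mk (σ g) = _
    rw [hσ, QuotientGroup.eq]
    simpa using (H.inv_mem (ρ g).2)
  have hcomp : (QuotientGroup.mk' H).comp s = MonoidHom.id (G ⧸ H) := by
    apply MonoidHom.ext
    intro d
    induction d using QuotientGroup.induction_on with
    | H g => exact hsec g
  -- discreteness of the quotient
  haveI : DiscreteTopology (G ⧸ H) := by
    rw [discreteTopology_iff_isOpen_singleton_one]
    have h1 : IsOpen ((QuotientGroup.mk : G → G ⧸ H) ⁻¹' {1}) := by
      have h2 : (QuotientGroup.mk : G → G ⧸ H) ⁻¹' {1} = (H : Set G) := by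
        ext g
        simp [QuotientGroup.eq_one_iff]
      rwa [h2]
    exact isQuotientMap_quot_mk.isOpen_preimage.mp h1
  -- the homeomorphism
  have hmemH : ∀ g : G, g * (s (QuotientGroup.mk g))⁻¹ ∈ H := by
    intro g
    rw [← QuotientGroup.eq_one_iff]
    rw [QuotientGroup.mk_mul, QuotientGroup.mk_inv, hsec g]
    exact mul_inv_cancel _
  set e : H × (G ⧸ H) ≃ G :=
    { toFun := fun p => (p.1 : G) * s p.2
      invFun := fun g => (⟨g * (s (QuotientGroup.mk g))⁻¹, hmemH g⟩, QuotientGroup.mk g)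
      left_inv := by
        rintro ⟨h, d⟩
        induction d using QuotientGroup.induction_on with
        | H g =>
          have hmk : (QuotientGroup.mk ((h : G) * s (QuotientGroup.mk g)) : G ⧸ H)
              = QuotientGroup.mk g := by
            rw [QuotientGroup.mk_mul, hsec g]
            have : (QuotientGroup.mk (h : G) : G ⧸ H) = 1 := by
              rw [QuotientGroup.eq_one_iff]; exact h.2
            rw [this, one_mul]
          refine Prod.ext (Subtype.ext ?_) hmk
          show (h : G) * s (QuotientGroup.mk g) * (s (QuotientGroup.mk
            ((h : G) * s (QuotientGroup.mk g))))⁻¹ = (h : G)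
          rw [hmk, mul_inv_cancel_right]
      right_inv := fun g => by
        show g * (s (QuotientGroup.mk g))⁻¹ * s (QuotientGroup.mk g) = g
        rw [inv_mul_cancel_right] } with hedef
  have hcont : Continuous e := by
    apply Continuous.mul
    · exact continuous_subtype_val.comp continuous_fst
    · exact (continuous_of_discreteTopology (f := fun d : G ⧸ H => s d)).comp continuous_snd
  have hcontinv : Continuous e.symm := by
    refine Continuous.prodMk ?_ (continuous_quot_mk)
    apply Continuous.subtype_mk
    exact continuous_id.mul
      (((continuous_of_discreteTopology (f := fun d : G ⧸ H => s d)).comp continuous_quot_mk).inv)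
  refine ⟨s, hcomp, ⟨⟨e, hcont, hcontinv⟩, ?_, fun h d => rfl⟩⟩
  rintro ⟨a, b⟩ ⟨c, d⟩
  show ((a * c : H) : G) * s (b * d) = ((a : G) * s b) * ((c : G) * s d)
  rw [map_mul]
  push_cast
  rw [mul_mul_mul_comm]
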